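/- For integers $1\le m \le k+n$ and $1\le i\le k$, define $p^{(n)}_{i,m}=\binom{2n}{n+m-i}-\binom{2n}{n+m+i-1}$. Then for any strictly increasing sequence $1\le m_1<\cdots<m_k\le k+n$, $\det_{1\le i,j\le k}\big(p^{(n)}_{i,m_j}\big) = \prod_{i=1}^k \frac{(2n+2i-2)!}{(n+m_i+k-1)!\,(n-m_i+k)!}\;\prod_{1\le i<j\le k}(m_j-m_i)\;\prod_{1\le i\le j\le k}(m_i+m_j-1)$. -/

import Mathlib

open Finset

/-- Binomial coefficient `n choose b` with an integer lower index, zero when `b < 0`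
(and, by the usual convention of `Nat.choose`, zero when `b > n`). -/
def intChoose (n : ℕ) (b : ℤ) : ℕ := if 0 ≤ b then n.choose b.toNat else 0

/-- The number `p^{(n)}_{i,m} = C(2n, n+m-i) - C(2n, n+m+i-1)` of lattice paths above a
floor (reflection principle), for `1 ≤ i`, `1 ≤ m`. -/
def pp (n i m : ℕ) : ℤ :=
  (intChoose (2 * n) ((n : ℤ) + m - i) : ℤ) - (intChoose (2 * n) ((n : ℤ) + m + i - 1) : ℤ)

section HalfcutAux
open Polynomial Equiv
noncomputable section

/-- rising product of `r` consecutive terms starting at `x`. -/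
def RP (x : ℝ) (r : ℕ) : ℝ := ∏ t ∈ Finset.range r, (x + t)

@[simp] lemma RP_zero (x : ℝ) : RP x 0 = 1 := by simp [RP]

lemma RP_succ (x : ℝ) (r : ℕ) : RP x (r + 1) = RP x r * (x + r) := by
  simp [RP, Finset.prod_range_succ]

lemma RP_succ' (x : ℝ) (r : ℕ) : RP x (r + 1) = x * RP (x + 1) r := by
  rw [RP, Finset.prod_range_succ']
  simp only [Nat.cast_zero, add_zero, RP]
  rw [mul_comm]
  congr 1
  apply Finset.prod_congr rfl
  intro t _
  push_cast
  ring

lemma RP_add (x : ℝ) (r s : ℕ) : RP x (r + s) = RP x r * RP (x + r) s := by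
  rw [RP, Finset.prod_range_add]
  congr 1
  apply Finset.prod_congr rfl
  intro t _
  push_cast
  ring

lemma RP_eq_zero {x : ℝ} {r : ℕ} (t : ℕ) (ht : t < r) (h : x + t = 0) : RP x r = 0 :=
  Finset.prod_eq_zero (Finset.mem_range.2 ht) h

lemma factorial_RP (a r : ℕ) :
    (a.factorial : ℝ) * RP ((a : ℝ) + 1) r = ((a + r).factorial : ℝ) := by
  induction r with
  | zero => simp
  | succ r ih =>
    rw [RP_succ, ← mul_assoc, ih]
    have : a + (r + 1) = (a + r) + 1 := by ring
    rw [this, Nat.factorial_succ]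
    push_cast
    ring

lemma intChoose_eq (N A B : ℕ) (b : ℤ) (r s : ℕ)
    (hr : (A : ℤ) = b + r) (hs : (B : ℤ) = (N : ℤ) - b + s) :
    (intChoose N b : ℝ) * A.factorial * B.factorial
      = N.factorial * (RP ((b : ℝ) + 1) r * RP ((N : ℝ) - b + 1) s) := by
  rcases lt_or_ge b 0 with hb | hb
  · rw [intChoose, if_neg (by omega)]
    have h0 : RP ((b : ℝ) + 1) r = 0 := by
      refine RP_eq_zero (-b - 1).toNat ?_ ?_
      · omega
      · have h1 : (((-b - 1).toNat : ℤ) : ℝ) = -(b : ℝ) - 1 := by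
          exact_mod_cast congrArg (Int.cast : ℤ → ℝ) (by omega : ((-b - 1).toNat : ℤ) = -b - 1)
        push_cast at h1 ⊢
        rw [h1]; ring
    rw [h0]
    push_cast
    ring
  · rcases le_or_gt b N with hbN | hbN
    · -- main case
      set b0 := b.toNat with hb0
      have hb0' : (b0 : ℤ) = b := Int.toNat_of_nonneg hb
      have hb0N : b0 ≤ N := by omega
      have hA : A = b0 + r := by omega
      have hB : B = (N - b0) + s := by omega
      rw [intChoose, if_pos hb]
      have c1 : (N.choose b0 : ℝ) * b0.factorial * (N - b0).factorial = N.factorial := by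
        rw [← Nat.cast_mul, ← Nat.cast_mul, Nat.choose_mul_factorial_mul_factorial hb0N]
      have c2 : (b0.factorial : ℝ) * RP ((b0 : ℝ) + 1) r = ((b0 + r).factorial : ℝ) :=
        factorial_RP b0 r
      have c3 : ((N - b0).factorial : ℝ) * RP (((N - b0 : ℕ) : ℝ) + 1) s
          = (((N - b0) + s).factorial : ℝ) := factorial_RP (N - b0) s
      have e1 : ((b0 : ℝ) : ℝ) = (b : ℝ) := by exact_mod_cast congrArg (Int.cast : ℤ → ℝ) hb0'
      have e2 : (((N - b0 : ℕ)) : ℝ) = (N : ℝ) - (b : ℝ) := by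
        have : ((N - b0 : ℕ) : ℤ) = (N : ℤ) - b := by omega
        exact_mod_cast congrArg (Int.cast : ℤ → ℝ) this
      rw [hA, hB]
      rw [e1] at c2
      rw [e2] at c3
      rw [← c2, ← c3]
      rw [← c1]
      ring
    · -- b > N : choose = 0 and RP ((N:ℝ)-b+1) s = 0
      rw [intChoose, if_pos hb, Nat.choose_eq_zero_of_lt (by omega : N < b.toNat)]
      have h0 : RP ((N : ℝ) - (b : ℝ) + 1) s = 0 := by
        refine RP_eq_zero (b - N - 1).toNat ?_ ?_
        · omega
        · have h1 : (((b - N - 1).toNat : ℤ) : ℝ) = (b : ℝ) - N - 1 := by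
            exact_mod_cast congrArg (Int.cast : ℤ → ℝ)
              (by omega : ((b - N - 1).toNat : ℤ) = b - N - 1)
          push_cast at h1 ⊢
          rw [h1]; ring
      rw [h0]
      push_cast
      ring

/-- pair of polynomials (in `w`) satisfying the joint recurrence. -/
def QP (n : ℕ) : ℕ → Polynomial ℝ × Polynomial ℝ
  | 0 => (1, C (2 * (n : ℝ) + 1))
  | (t + 1) =>
      (-(X + C (((t : ℝ) + 1) ^ 2)) * (QP n t).1 + C (2 * (n : ℝ) + 1) * (QP n t).2,
       -(C (2 * (n : ℝ) + 1) * X) * (QP n t).1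
         + (C ((2 * (n : ℝ) + 1) ^ 2) - (X + C (((t : ℝ) + 1) ^ 2))) * (QP n t).2)

lemma QP_eval (n : ℕ) : ∀ (t : ℕ) (x : ℝ),
    RP ((n : ℝ) + x - t) (2 * t + 1) - RP ((n : ℝ) + 1 - x - t) (2 * t + 1)
        = (2 * x - 1) * (QP n t).1.eval (((n : ℝ) + x) * ((n : ℝ) + 1 - x))
    ∧ ((n : ℝ) + x) * RP ((n : ℝ) + x - t) (2 * t + 1)
        - ((n : ℝ) + 1 - x) * RP ((n : ℝ) + 1 - x - t) (2 * t + 1)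
        = (2 * x - 1) * (QP n t).2.eval (((n : ℝ) + x) * ((n : ℝ) + 1 - x)) := by
  intro t
  induction t with
  | zero =>
    intro x
    have h1 : ∀ y : ℝ, RP (y - (0:ℕ)) (2 * 0 + 1) = y := by
      intro y
      rw [show 2 * 0 + 1 = 0 + 1 from rfl, RP_succ, RP_zero]
      push_cast; ring
    rw [h1, h1]
    simp only [QP, eval_one, eval_C]
    constructor <;> ring
  | succ t ih =>
    intro x
    obtain ⟨hG, hH⟩ := ih x
    have exp : ∀ y : ℝ, RP (y - (t + 1 : ℕ)) (2 * (t + 1) + 1)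
        = (y - (t + 1)) * RP (y - t) (2 * t + 1) * (y + (t + 1)) := by
      intro y
      rw [show 2 * (t + 1) + 1 = ((2 * t + 1) + 1) + 1 from by ring, RP_succ, RP_succ']
      rw [show y - ((t + 1 : ℕ) : ℝ) + 1 = y - t from by push_cast; ring]
      rw [show y - ((t + 1 : ℕ) : ℝ) + ((2 * t + 1 + 1 : ℕ) : ℝ) = y + ((t:ℝ) + 1) from by
        push_cast; ring]
      rw [show ((t + 1 : ℕ) : ℝ) = (t : ℝ) + 1 from by push_cast; ring]
    rw [exp ((n : ℝ) + x), exp ((n : ℝ) + 1 - x)]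
    have ev1 : (QP n (t + 1)).1.eval (((n : ℝ) + x) * ((n : ℝ) + 1 - x))
        = -((((n : ℝ) + x) * ((n : ℝ) + 1 - x)) + ((t : ℝ) + 1) ^ 2)
              * (QP n t).1.eval (((n : ℝ) + x) * ((n : ℝ) + 1 - x))
          + (2 * (n : ℝ) + 1) * (QP n t).2.eval (((n : ℝ) + x) * ((n : ℝ) + 1 - x)) := by
      simp [QP]
    have ev2 : (QP n (t + 1)).2.eval (((n : ℝ) + x) * ((n : ℝ) + 1 - x))
        = -((2 * (n : ℝ) + 1) * (((n : ℝ) + x) * ((n : ℝ) + 1 - x)))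
              * (QP n t).1.eval (((n : ℝ) + x) * ((n : ℝ) + 1 - x))
          + ((2 * (n : ℝ) + 1) ^ 2 - ((((n : ℝ) + x) * ((n : ℝ) + 1 - x)) + ((t : ℝ) + 1) ^ 2))
              * (QP n t).2.eval (((n : ℝ) + x) * ((n : ℝ) + 1 - x)) := by
      simp [QP]
    constructor
    · rw [ev1]
      linear_combination (2 * (n:ℝ) + 1) * hH
        - (((n:ℝ) + x) * ((n:ℝ) + 1 - x) + ((t:ℝ) + 1) ^ 2) * hG
    · rw [ev2]
      linear_combination ((2 * (n:ℝ) + 1) ^ 2 - ((n:ℝ) + x) * ((n:ℝ) + 1 - x)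
          - ((t:ℝ) + 1) ^ 2) * hH
        - (2 * (n:ℝ) + 1) * (((n:ℝ) + x) * ((n:ℝ) + 1 - x)) * hG

lemma QP_natDegree (n : ℕ) : ∀ t : ℕ,
    (QP n t).1.natDegree ≤ t ∧ (QP n t).2.natDegree ≤ t := by
  intro t
  induction t with
  | zero =>
    constructor
    · show (1 : Polynomial ℝ).natDegree ≤ 0
      simp
    · show (C (2 * (n : ℝ) + 1)).natDegree ≤ 0
      exact (natDegree_C _).le
  | succ t ih =>
    obtain ⟨h1, h2⟩ := ih
    have hXC : ∀ c : ℝ, (X + C c).natDegree ≤ 1 := fun c => (natDegree_X_add_C c).le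
    constructor
    · apply le_trans (natDegree_add_le _ _)
      simp only [max_le_iff]
      constructor
      · apply le_trans (natDegree_mul_le)
        have := hXC (((t : ℝ) + 1) ^ 2)
        simp only [natDegree_neg]
        omega
      · apply le_trans (natDegree_mul_le)
        have := natDegree_C (2 * (n : ℝ) + 1)
        omega
    · apply le_trans (natDegree_add_le _ _)
      simp only [max_le_iff]
      constructor
      · apply le_trans (natDegree_mul_le)
        have hX : (C (2 * (n : ℝ) + 1) * X).natDegree ≤ 1 := by
          apply le_trans (natDegree_mul_le)
          have := natDegree_C (2 * (n : ℝ) + 1)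
          have := natDegree_X (R := ℝ)
          omega
        simp only [natDegree_neg]
        omega
      · apply le_trans (natDegree_mul_le)
        have : (C ((2 * (n : ℝ) + 1) ^ 2) - (X + C (((t : ℝ) + 1) ^ 2))).natDegree ≤ 1 := by
          apply le_trans (natDegree_sub_le _ _)
          rw [max_le_iff]
          refine ⟨?_, hXC _⟩
          have := natDegree_C ((2 * (n : ℝ) + 1) ^ 2)
          omega
        omega

lemma QP_eval_node (n t : ℕ) :
    (QP n t).1.eval (-((t : ℝ) * (2 * (n : ℝ) + 1 + t))) = RP (2 * (n : ℝ) + 1) (2 * t) := by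
  have h := (QP_eval n t ((n : ℝ) + t + 1)).1
  have e1 : (n : ℝ) + ((n : ℝ) + t + 1) - t = 2 * (n : ℝ) + 1 := by ring
  have e2 : (n : ℝ) + 1 - ((n : ℝ) + t + 1) - t = -(2 * (t : ℝ)) := by ring
  have e3 : ((n : ℝ) + ((n : ℝ) + t + 1)) * ((n : ℝ) + 1 - ((n : ℝ) + t + 1))
      = -((t : ℝ) * (2 * (n : ℝ) + 1 + t)) := by ring
  rw [e1, e2, e3] at h
  have hz : RP (-(2 * (t : ℝ))) (2 * t + 1) = 0 := by
    refine RP_eq_zero (2 * t) (by omega) ?_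
    push_cast; ring
  rw [hz, sub_zero] at h
  have hsplit : RP (2 * (n : ℝ) + 1) (2 * t + 1)
      = RP (2 * (n : ℝ) + 1) (2 * t) * (2 * (n : ℝ) + 1 + 2 * t) := by
    rw [RP_succ]; push_cast; ring_nf
  rw [hsplit] at h
  have heq : 2 * ((n : ℝ) + (t : ℝ) + 1) - 1 = 2 * (n : ℝ) + 1 + 2 * (t : ℝ) := by ring
  rw [heq] at h
  have hne : (2 * (n : ℝ) + 1 + 2 * (t : ℝ)) ≠ 0 := by positivity
  apply mul_left_cancel₀ hne
  rw [← h]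
  ring

lemma newton_expansion (b : ℕ → ℝ) : ∀ (d : ℕ) (P : Polynomial ℝ), P.natDegree ≤ d →
    ∃ μ : ℕ → ℝ, μ d = P.eval (b d) ∧
      ∀ x : ℝ, P.eval x = ∑ s ∈ Finset.range (d + 1),
        μ s * ∏ c ∈ Finset.Ioc s d, (x - b c) := by
  intro d
  induction d with
  | zero =>
    intro P hP
    refine ⟨fun _ => P.eval (b 0), rfl, fun x => ?_⟩
    rw [Polynomial.eq_C_of_natDegree_le_zero hP]
    simp
  | succ d ih =>
    intro P hP
    set P1 := P /ₘ (X - C (b (d + 1))) with hP1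
    have hrem : P %ₘ (X - C (b (d + 1))) = C (P.eval (b (d + 1))) :=
      Polynomial.modByMonic_X_sub_C_eq_C_eval P (b (d + 1))
    have hdecomp : ∀ x : ℝ, P.eval x = (x - b (d + 1)) * P1.eval x + P.eval (b (d + 1)) := by
      intro x
      conv_lhs => rw [← Polynomial.modByMonic_add_div P (X - C (b (d + 1)))]
      rw [hrem]
      simp [hP1]
      ring
    have hdeg : P1.natDegree ≤ d := by
      rw [hP1, Polynomial.natDegree_divByMonic P (Polynomial.monic_X_sub_C (b (d + 1)))]
      rw [Polynomial.natDegree_X_sub_C]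
      omega
    obtain ⟨ν, hν, hexp⟩ := ih P1 hdeg
    refine ⟨fun s => if s = d + 1 then P.eval (b (d + 1)) else ν s, by simp, fun x => ?_⟩
    rw [Finset.sum_range_succ]
    have hIoc_self : Finset.Ioc (d + 1) (d + 1) = ∅ := by
      simp
    simp only [hIoc_self, Finset.prod_empty, mul_one, if_pos rfl]
    have hstep : ∀ s ∈ Finset.range (d + 1),
        (if s = d + 1 then P.eval (b (d + 1)) else ν s) * ∏ c ∈ Finset.Ioc s (d + 1), (x - b c)
          = (ν s * ∏ c ∈ Finset.Ioc s d, (x - b c)) * (x - b (d + 1)) := by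
      intro s hs
      rw [Finset.mem_range] at hs
      rw [if_neg (by omega)]
      rw [Finset.prod_Ioc_succ_top (by omega : s ≤ d)]
      ring
    rw [Finset.sum_congr rfl hstep, ← Finset.sum_mul, ← hexp, hdecomp x]
    simp
    ring

lemma sign_revPerm : ∀ k : ℕ,
    Equiv.Perm.sign (Fin.revPerm : Equiv.Perm (Fin k)) = (-1) ^ (k * (k - 1) / 2) := by
  intro k
  induction k with
  | zero =>
    simp [Subsingleton.elim (Fin.revPerm : Equiv.Perm (Fin 0)) 1]
  | succ k ih =>
    have hdecomp : (Fin.revPerm : Equiv.Perm (Fin (k + 1)))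
        = finRotate (k + 1)
          * (Equiv.permCongr (finSuccEquivLast).symm (Fin.revPerm : Equiv.Perm (Fin k)).optionCongr) := by
      ext x
      refine Fin.lastCases ?_ ?_ x
      · simp only [Equiv.Perm.mul_apply, Equiv.permCongr_apply, Equiv.symm_symm,
          finSuccEquivLast_last, Equiv.optionCongr_apply, Option.map_none,
          finSuccEquivLast_symm_none, finRotate_last, Fin.revPerm_apply, Fin.rev_last]
      · intro i
        simp only [Equiv.Perm.mul_apply, Equiv.permCongr_apply, Equiv.symm_symm,
          finSuccEquivLast_castSucc, Equiv.optionCongr_apply, Option.map_some,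
          finSuccEquivLast_symm_some, Fin.revPerm_apply, Fin.rev_castSucc]
        rw [finRotate_succ_apply]
        rw [Fin.coeSucc_eq_succ]
    rw [hdecomp, map_mul, sign_finRotate, Equiv.Perm.sign_permCongr, Equiv.optionCongr_sign, ih]
    rw [← pow_add]
    congr 1
    rw [← Nat.choose_two_right, ← Nat.choose_two_right,
      Nat.choose_succ_succ, Nat.choose_one_right]
    simp

lemma entry_eq (n t u mv : ℕ) (hm : 1 ≤ mv) (hub : mv ≤ (t + 1 + u) + n) :
    (pp n (t + 1) mv : ℝ) * ((n + mv + (t + u)).factorial)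
        * ((n + (t + 1 + u) - mv).factorial)
      = (2 * n).factorial * ((2 * (mv : ℝ) - 1)
          * (QP n t).1.eval (((n : ℝ) + mv) * ((n : ℝ) + 1 - mv))
          * ∏ c ∈ Finset.Ioc t (t + u),
              (((n : ℝ) + mv) * ((n : ℝ) + 1 - mv) - (-((c : ℝ) * (2 * (n : ℝ) + 1 + c))))) := by
  set W : ℝ := ((n : ℝ) + mv) * ((n : ℝ) + 1 - mv) with hW
  -- the two binomial coefficient evaluations
  have h1 := intChoose_eq (2 * n) (n + mv + (t + u)) (n + (t + 1 + u) - mv)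
      ((n : ℤ) + mv - ((t : ℤ) + 1)) ((2 * t + 1) + u) u (by push_cast; ring) (by omega)
  have h2 := intChoose_eq (2 * n) (n + mv + (t + u)) (n + (t + 1 + u) - mv)
      ((n : ℤ) + mv + ((t : ℤ) + 1) - 1) u ((2 * t + 1) + u) (by push_cast; ring) (by omega)
  -- rewrite pp
  have hpp : (pp n (t + 1) mv : ℝ)
      = (intChoose (2 * n) ((n : ℤ) + mv - ((t : ℤ) + 1)) : ℝ)
        - (intChoose (2 * n) ((n : ℤ) + mv + ((t : ℤ) + 1) - 1) : ℝ) := by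
    rw [pp]
    push_cast
    ring
  -- split the long rising products
  have split1 : RP ((((n : ℤ) + mv - ((t : ℤ) + 1) : ℤ) : ℝ) + 1) ((2 * t + 1) + u)
      = RP ((n : ℝ) + mv - t) (2 * t + 1) * RP ((n : ℝ) + mv + t + 1) u := by
    rw [RP_add]
    congr 1
    · congr 1
      push_cast; ring
    · congr 1
      push_cast; ring
  have split2 : RP (((2 * n : ℕ) : ℝ) - (((n : ℤ) + mv + ((t : ℤ) + 1) - 1 : ℤ) : ℝ) + 1)
        ((2 * t + 1) + u)
      = RP ((n : ℝ) + 1 - mv - t) (2 * t + 1) * RP ((n : ℝ) + t + 2 - mv) u := by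
    rw [RP_add]
    congr 1
    · congr 1
      push_cast; ring
    · congr 1
      push_cast; ring
  have e1 : RP ((((n : ℤ) + mv + ((t : ℤ) + 1) - 1 : ℤ) : ℝ) + 1) u
      = RP ((n : ℝ) + mv + t + 1) u := by
    congr 1; push_cast; ring
  have e2 : RP (((2 * n : ℕ) : ℝ) - (((n : ℤ) + mv - ((t : ℤ) + 1) : ℤ) : ℝ) + 1) u
      = RP ((n : ℝ) + t + 2 - mv) u := by
    congr 1; push_cast; ring
  -- the key difference identity
  have hQ := (QP_eval n t (mv : ℝ)).1
  -- the E–product as a product over Ioc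
  have hE : RP ((n : ℝ) + mv + t + 1) u * RP ((n : ℝ) + t + 2 - mv) u
      = ∏ c ∈ Finset.Ioc t (t + u), (W - (-((c : ℝ) * (2 * (n : ℝ) + 1 + c)))) := by
    rw [RP, RP, ← Finset.prod_mul_distrib]
    refine Finset.prod_nbij' (fun j => t + 1 + j) (fun c => c - (t + 1)) ?_ ?_ ?_ ?_ ?_
    · intro j hj
      rw [Finset.mem_range] at hj
      rw [Finset.mem_Ioc]
      show t < t + 1 + j ∧ t + 1 + j ≤ t + u
      omega
    · intro c hc
      rw [Finset.mem_Ioc] at hc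
      rw [Finset.mem_range]
      show c - (t + 1) < u
      omega
    · intro j hj
      rw [Finset.mem_range] at hj
      show t + 1 + j - (t + 1) = j
      omega
    · intro c hc
      rw [Finset.mem_Ioc] at hc
      show t + 1 + (c - (t + 1)) = c
      omega
    · intro j hj
      show ((n : ℝ) + mv + t + 1 + j) * ((n : ℝ) + t + 2 - mv + j)
          = W - (-(((t + 1 + j : ℕ) : ℝ) * (2 * (n : ℝ) + 1 + ((t + 1 + j : ℕ) : ℝ))))
      rw [hW]
      push_cast
      ring
  calc (pp n (t + 1) mv : ℝ) * ((n + mv + (t + u)).factorial)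
        * ((n + (t + 1 + u) - mv).factorial)
      = ((intChoose (2 * n) ((n : ℤ) + mv - ((t : ℤ) + 1)) : ℝ) * ((n + mv + (t + u)).factorial)
          * ((n + (t + 1 + u) - mv).factorial))
        - ((intChoose (2 * n) ((n : ℤ) + mv + ((t : ℤ) + 1) - 1) : ℝ)
          * ((n + mv + (t + u)).factorial) * ((n + (t + 1 + u) - mv).factorial)) := by
        rw [hpp]; ring
    _ = (2 * n).factorial *
          (RP ((n : ℝ) + mv - t) (2 * t + 1) * RP ((n : ℝ) + mv + t + 1) u
            * RP ((n : ℝ) + t + 2 - mv) u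
          - RP ((n : ℝ) + mv + t + 1) u * (RP ((n : ℝ) + 1 - mv - t) (2 * t + 1)
            * RP ((n : ℝ) + t + 2 - mv) u)) := by
        rw [h1, h2, split1, split2, e1, e2]; ring
    _ = (2 * n).factorial * ((RP ((n : ℝ) + mv - t) (2 * t + 1)
            - RP ((n : ℝ) + 1 - mv - t) (2 * t + 1))
          * (RP ((n : ℝ) + mv + t + 1) u * RP ((n : ℝ) + t + 2 - mv) u)) := by ring
    _ = (2 * n).factorial * ((2 * (mv : ℝ) - 1)
          * (QP n t).1.eval W
          * ∏ c ∈ Finset.Ioc t (t + u), (W - (-((c : ℝ) * (2 * (n : ℝ) + 1 + c))))) := by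
        rw [hE]
        rw [← hW] at hQ
        rw [hQ]

-- helper: product over strict pairs as iterated product
lemma prod_pairs_lt {k : ℕ} (f : Fin k → Fin k → ℝ) :
    ∏ p ∈ Finset.univ.filter (fun p : Fin k × Fin k => p.1 < p.2), f p.1 p.2
      = ∏ i : Fin k, ∏ j ∈ Finset.Ioi i, f i j := by
  rw [Finset.prod_filter]
  rw [Fintype.prod_prod_type]
  apply Finset.prod_congr rfl
  intro i _
  rw [← Finset.prod_filter]
  congr 1
  ext j
  simp [Finset.mem_Ioi]

lemma prod_pairs_le {k : ℕ} (f : Fin k → Fin k → ℝ) :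
    ∏ p ∈ Finset.univ.filter (fun p : Fin k × Fin k => p.1 ≤ p.2), f p.1 p.2
      = (∏ p ∈ Finset.univ.filter (fun p : Fin k × Fin k => p.1 < p.2), f p.1 p.2)
        * ∏ i : Fin k, f i i := by
  have hsplit : Finset.univ.filter (fun p : Fin k × Fin k => p.1 ≤ p.2)
      = (Finset.univ.filter (fun p : Fin k × Fin k => p.1 < p.2))
        ∪ (Finset.univ.filter (fun p : Fin k × Fin k => p.1 = p.2)) := by
    ext p
    simp only [Finset.mem_filter, Finset.mem_union, Finset.mem_univ, true_and]
    constructor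
    · intro h
      rcases lt_or_eq_of_le h with h | h
      · exact Or.inl h
      · exact Or.inr h
    · rintro (h | h)
      · exact le_of_lt h
      · exact le_of_eq h
  have hdisj : Disjoint (Finset.univ.filter (fun p : Fin k × Fin k => p.1 < p.2))
      (Finset.univ.filter (fun p : Fin k × Fin k => p.1 = p.2)) := by
    rw [Finset.disjoint_filter]
    intro p _ hlt heq
    exact absurd heq (ne_of_lt hlt)
  rw [hsplit, Finset.prod_union hdisj]
  congr 1
  have : ∀ p ∈ Finset.univ.filter (fun p : Fin k × Fin k => p.1 = p.2), f p.1 p.2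
      = f p.1 p.1 := by
    intro p hp
    simp only [Finset.mem_filter, Finset.mem_univ, true_and] at hp
    rw [← hp]
  rw [Finset.prod_congr rfl this]
  refine Finset.prod_nbij' (fun p => p.1) (fun i => (i, i)) ?_ ?_ ?_ ?_ ?_
  · intro p _
    exact Finset.mem_univ _
  · intro i _
    simp only [Finset.mem_filter, Finset.mem_univ, true_and]
  · intro p hp
    simp only [Finset.mem_filter, Finset.mem_univ, true_and] at hp
    exact Prod.ext rfl hp
  · intro i _
    rfl
  · intro p _
    rfl

/-- Factorized form of the LGV determinant for the half-cut hexagon with zig-zag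
boundary: `det(p^{(n)}_{i, m_j}) = ∏_i (2n+2i-2)!/((n+m_i+k-1)!(n-m_i+k)!)
· ∏_{i<j}(m_j-m_i) · ∏_{i≤j}(m_i+m_j-1)`. -/
theorem halfcut_LGV_product_form (n k : ℕ) (hn : 0 < n) (hk : 0 < k)
    (m : Fin k → ℕ) (hm : StrictMono m) (hlb : ∀ i, 1 ≤ m i) (hub : ∀ i, m i ≤ k + n) :
    (Matrix.det (Matrix.of fun i j : Fin k => ((pp n ((i : ℕ) + 1) (m j) : ℝ))))
      = (∏ i : Fin k,
            (Nat.factorial (2 * n + 2 * ((i : ℕ) + 1) - 2) : ℝ)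
              / ((Nat.factorial (n + m i + k - 1) : ℝ) * (Nat.factorial (n + k - m i) : ℝ)))
        * (∏ p ∈ Finset.univ.filter (fun p : Fin k × Fin k => p.1 < p.2),
            ((m p.2 : ℝ) - (m p.1 : ℝ)))
        * ∏ p ∈ Finset.univ.filter (fun p : Fin k × Fin k => p.1 ≤ p.2),
            ((m p.1 : ℝ) + (m p.2 : ℝ) - 1) := by
  classical
  -- Newton coefficients for each row
  have hμex : ∀ i : Fin k, ∃ μ : ℕ → ℝ, μ (i : ℕ) = RP (2 * (n : ℝ) + 1) (2 * (i : ℕ)) ∧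
      ∀ x : ℝ, (QP n (i : ℕ)).1.eval x = ∑ s ∈ Finset.range ((i : ℕ) + 1),
        μ s * ∏ c ∈ Finset.Ioc s (i : ℕ), (x - (-((c : ℝ) * (2 * (n : ℝ) + 1 + c)))) := by
    intro i
    obtain ⟨μ, h1, h2⟩ := newton_expansion (fun c : ℕ => -((c : ℝ) * (2 * (n : ℝ) + 1 + c)))
      (i : ℕ) (QP n (i : ℕ)).1 (QP_natDegree n (i : ℕ)).1
    exact ⟨μ, by rw [h1]; exact QP_eval_node n (i : ℕ), h2⟩
  choose μ hμdiag hμexp using hμex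
  simp only [sub_neg_eq_add] at hμexp
  -- the three matrices
  set L : Matrix (Fin k) (Fin k) ℝ :=
    Matrix.of (fun i s : Fin k => if (s : ℕ) ≤ (i : ℕ) then μ i (s : ℕ) else 0) with hL
  set Φ : Matrix (Fin k) (Fin k) ℝ :=
    Matrix.of (fun s j : Fin k => ∏ c ∈ Finset.Ioc (s : ℕ) (k - 1),
      (((n : ℝ) + m j) * ((n : ℝ) + 1 - m j) + (c : ℝ) * (2 * (n : ℝ) + 1 + c))) with hΦ
  set D : Matrix (Fin k) (Fin k) ℝ := Matrix.diagonal (fun j => ((2 * n).factorial : ℝ)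
      / (((n + m j + k - 1).factorial : ℝ) * ((n + k - m j).factorial : ℝ))
      * (2 * (m j : ℝ) - 1)) with hD
  -- entrywise identity
  have hMeq : (Matrix.of fun i j : Fin k => ((pp n ((i : ℕ) + 1) (m j) : ℝ))) = L * Φ * D := by
    ext i j
    have hik : (i : ℕ) < k := i.isLt
    have hF1 : ((n + m j + k - 1).factorial : ℝ) ≠ 0 :=
      Nat.cast_ne_zero.2 (Nat.factorial_ne_zero _)
    have hF2 : ((n + k - m j).factorial : ℝ) ≠ 0 :=
      Nat.cast_ne_zero.2 (Nat.factorial_ne_zero _)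
    have he := entry_eq n (i : ℕ) (k - 1 - (i : ℕ)) (m j) (hlb j) (by have := hub j; omega)
    simp only [sub_neg_eq_add] at he
    rw [show n + m j + ((i : ℕ) + (k - 1 - (i : ℕ))) = n + m j + k - 1 by
      have := hlb j; omega] at he
    rw [show n + ((i : ℕ) + 1 + (k - 1 - (i : ℕ))) - m j = n + k - m j by omega] at he
    rw [show (i : ℕ) + (k - 1 - (i : ℕ)) = k - 1 by omega] at he
    rw [hμexp i (((n : ℝ) + m j) * ((n : ℝ) + 1 - m j))] at he
    rw [mul_assoc (2 * (m j : ℝ) - 1)] at he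
    have hmerge : (∑ s ∈ Finset.range ((i : ℕ) + 1),
          μ i s * ∏ c ∈ Finset.Ioc s (i : ℕ),
            ((((n : ℝ) + m j) * ((n : ℝ) + 1 - m j)) + (c : ℝ) * (2 * (n : ℝ) + 1 + c)))
          * ∏ c ∈ Finset.Ioc (i : ℕ) (k - 1),
              ((((n : ℝ) + m j) * ((n : ℝ) + 1 - m j)) + (c : ℝ) * (2 * (n : ℝ) + 1 + c))
        = ∑ s ∈ Finset.range ((i : ℕ) + 1),
            μ i s * ∏ c ∈ Finset.Ioc s (k - 1),
              ((((n : ℝ) + m j) * ((n : ℝ) + 1 - m j)) + (c : ℝ) * (2 * (n : ℝ) + 1 + c)) := by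
      rw [Finset.sum_mul]
      apply Finset.sum_congr rfl
      intro s hs
      rw [Finset.mem_range] at hs
      rw [mul_assoc]
      congr 1
      exact Finset.prod_Ioc_consecutive _ (by omega) (by omega)
    rw [hmerge] at he
    -- compute the matrix product entry
    have hprod : (L * Φ * D) i j = (∑ s ∈ Finset.range ((i : ℕ) + 1),
          μ i s * ∏ c ∈ Finset.Ioc s (k - 1),
            ((((n : ℝ) + m j) * ((n : ℝ) + 1 - m j)) + (c : ℝ) * (2 * (n : ℝ) + 1 + c)))
        * (((2 * n).factorial : ℝ)
            / (((n + m j + k - 1).factorial : ℝ) * ((n + k - m j).factorial : ℝ))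
            * (2 * (m j : ℝ) - 1)) := by
      rw [hD, Matrix.mul_diagonal]
      congr 1
      rw [Matrix.mul_apply]
      have hstep : ∀ s : Fin k, L i s * Φ s j
          = (fun s0 : ℕ => if s0 ≤ (i : ℕ) then
              μ i s0 * ∏ c ∈ Finset.Ioc s0 (k - 1),
                ((((n : ℝ) + m j) * ((n : ℝ) + 1 - m j))
                  + (c : ℝ) * (2 * (n : ℝ) + 1 + c)) else 0) (s : ℕ) := by
        intro s
        simp only [hL, hΦ, Matrix.of_apply]
        by_cases hcase : (s : ℕ) ≤ (i : ℕ)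
        · rw [if_pos hcase, if_pos hcase]
        · rw [if_neg hcase, if_neg hcase, zero_mul]
      rw [Finset.sum_congr rfl (fun s _ => hstep s)]
      rw [Fin.sum_univ_eq_sum_range (fun s0 : ℕ => if s0 ≤ (i : ℕ) then
              μ i s0 * ∏ c ∈ Finset.Ioc s0 (k - 1),
                ((((n : ℝ) + m j) * ((n : ℝ) + 1 - m j))
                  + (c : ℝ) * (2 * (n : ℝ) + 1 + c)) else 0) k]
      rw [← Finset.sum_filter]
      rw [show Finset.filter (fun s0 => s0 ≤ (i : ℕ)) (Finset.range k)
          = Finset.range ((i : ℕ) + 1) from by ext s; simp [Finset.mem_range]; omega]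
    rw [hprod, Matrix.of_apply]
    apply mul_right_cancel₀ (mul_ne_zero hF1 hF2)
    set S := ∑ s ∈ Finset.range ((i : ℕ) + 1),
          μ i s * ∏ c ∈ Finset.Ioc s (k - 1),
            ((((n : ℝ) + m j) * ((n : ℝ) + 1 - m j)) + (c : ℝ) * (2 * (n : ℝ) + 1 + c)) with hS
    field_simp
    linear_combination he
  rw [hMeq, Matrix.det_mul, Matrix.det_mul]
  -- determinant of L
  have hdetL : L.det = ∏ i : Fin k, RP (2 * (n : ℝ) + 1) (2 * (i : ℕ)) := by
    rw [Matrix.det_of_lowerTriangular L (fun i j hij => by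
      have hij' : i < j := hij
      simp only [hL, Matrix.of_apply]
      rw [if_neg (by exact fun hc => absurd (Fin.lt_iff_val_lt_val.1 hij') (by omega))])]
    apply Finset.prod_congr rfl
    intro i _
    simp only [hL, Matrix.of_apply, if_pos (le_refl _)]
    exact hμdiag i
  -- determinant of Φ
  set pl : Fin k → Polynomial ℝ := fun s =>
    ∏ c ∈ Finset.Ioc (k - 1 - (s : ℕ)) (k - 1), (X + C ((c : ℝ) * (2 * (n : ℝ) + 1 + c)))
    with hpl
  have hmonic : ∀ s, (pl s).Monic := by
    intro s
    exact monic_prod_of_monic _ _ (fun c _ => monic_X_add_C _)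
  have hdeg : ∀ s : Fin k, (pl s).natDegree = (s : ℕ) := by
    intro s
    rw [hpl]
    rw [natDegree_prod_of_monic _ _ (fun c _ => monic_X_add_C _)]
    rw [Finset.sum_congr rfl (fun c _ => natDegree_X_add_C _)]
    rw [Finset.sum_const, Nat.card_Ioc, smul_eq_mul, mul_one]
    have := s.isLt
    omega
  set B : Matrix (Fin k) (Fin k) ℝ :=
    Matrix.of (fun i j : Fin k => (pl j).eval (((n : ℝ) + m i) * ((n : ℝ) + 1 - m i))) with hB
  have hdetB : B.det = (Matrix.vandermonde
      (fun j : Fin k => ((n : ℝ) + m j) * ((n : ℝ) + 1 - m j))).det := by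
    rw [Matrix.det_eval_matrixOfPolynomials_eq_det_vandermonde _ pl hdeg hmonic]
  have hΦB : Φ = (B.transpose).submatrix Fin.revPerm id := by
    ext s j
    simp only [hΦ, hB, Matrix.submatrix_apply, Matrix.transpose_apply, Matrix.of_apply, id_eq]
    rw [hpl]
    simp only [eval_prod, eval_add, eval_X, eval_C]
    have hrev : k - 1 - ((Fin.revPerm s : Fin k) : ℕ) = (s : ℕ) := by
      have h1 : ((Fin.revPerm s : Fin k) : ℕ) = k - 1 - (s : ℕ) := by
        simp [Fin.revPerm, Fin.val_rev]
        omega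
      have := s.isLt
      omega
    rw [hrev]
  have hdetΦ : Φ.det = ((Equiv.Perm.sign (Fin.revPerm : Equiv.Perm (Fin k)) : ℤ) : ℝ)
      * ∏ i : Fin k, ∏ j ∈ Finset.Ioi i,
        ((((n : ℝ) + m j) * ((n : ℝ) + 1 - m j)) - (((n : ℝ) + m i) * ((n : ℝ) + 1 - m i))) := by
    rw [hΦB, Matrix.det_permute, Matrix.det_transpose, hdetB, Matrix.det_vandermonde]
    try push_cast
    try ring
  rw [hdetL, hdetΦ, hD, Matrix.det_diagonal]
  -- now pure scalar bookkeeping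
  have hsign : ((Equiv.Perm.sign (Fin.revPerm : Equiv.Perm (Fin k)) : ℤ) : ℝ)
      = (-1 : ℝ) ^ (k * (k - 1) / 2) := by
    rw [sign_revPerm k]
    push_cast
    ring
  have hWfactor : (∏ i : Fin k, ∏ j ∈ Finset.Ioi i,
        ((((n : ℝ) + m j) * ((n : ℝ) + 1 - m j)) - (((n : ℝ) + m i) * ((n : ℝ) + 1 - m i))))
      = (-1 : ℝ) ^ (k * (k - 1) / 2)
        * ((∏ i : Fin k, ∏ j ∈ Finset.Ioi i, ((m j : ℝ) - (m i : ℝ)))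
          * ∏ i : Fin k, ∏ j ∈ Finset.Ioi i, ((m i : ℝ) + (m j : ℝ) - 1)) := by
    have hterm : ∀ i : Fin k, ∀ j ∈ Finset.Ioi i,
        (((n : ℝ) + m j) * ((n : ℝ) + 1 - m j)) - (((n : ℝ) + m i) * ((n : ℝ) + 1 - m i))
          = (-1 : ℝ) * (((m j : ℝ) - (m i : ℝ)) * ((m i : ℝ) + (m j : ℝ) - 1)) := by
      intro i j _
      ring
    rw [Finset.prod_congr rfl (fun i _ => Finset.prod_congr rfl (hterm i))]
    rw [Finset.prod_congr rfl (fun i (_ : i ∈ Finset.univ) => Finset.prod_mul_distrib)]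
    rw [Finset.prod_mul_distrib]
    rw [Finset.prod_congr rfl (fun i (_ : i ∈ Finset.univ) =>
      Finset.prod_mul_distrib (s := Finset.Ioi i)
        (f := fun j => (m j : ℝ) - (m i : ℝ)) (g := fun j => (m i : ℝ) + (m j : ℝ) - 1))]
    rw [Finset.prod_mul_distrib]
    have hconst : (∏ i : Fin k, ∏ _j ∈ Finset.Ioi i, (-1 : ℝ)) = (-1 : ℝ) ^ (k * (k - 1) / 2) := by
      rw [Finset.prod_congr rfl (fun i (_ : i ∈ Finset.univ) =>
        Finset.prod_const (b := (-1 : ℝ)))]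
      rw [Finset.prod_pow_eq_pow_sum]
      congr 1
      rw [Finset.sum_congr rfl (fun i (_ : i ∈ Finset.univ) => Fin.card_Ioi i)]
      rw [Fin.sum_univ_eq_sum_range (fun i => k - 1 - i)]
      rw [show (∑ i ∈ Finset.range k, (k - 1 - i)) = ∑ i ∈ Finset.range k, i from
        Finset.sum_range_reflect id k]
      exact Finset.sum_range_id k
    rw [hconst]
    try ring
  rw [hWfactor]
  -- convert the right-hand side products
  rw [prod_pairs_lt (fun i j => (m j : ℝ) - (m i : ℝ))]
  rw [prod_pairs_le (fun i j => (m i : ℝ) + (m j : ℝ) - 1)]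
  rw [prod_pairs_lt (fun i j => (m i : ℝ) + (m j : ℝ) - 1)]
  -- merge the per-row constants
  have hrowconst : (∏ i : Fin k, RP (2 * (n : ℝ) + 1) (2 * (i : ℕ)))
      * (∏ j : Fin k, ((2 * n).factorial : ℝ)
          / (((n + m j + k - 1).factorial : ℝ) * ((n + k - m j).factorial : ℝ))
          * (2 * (m j : ℝ) - 1))
      = (∏ i : Fin k, ((2 * n + 2 * ((i : ℕ) + 1) - 2).factorial : ℝ)
          / (((n + m i + k - 1).factorial : ℝ) * ((n + k - m i).factorial : ℝ)))
        * ∏ i : Fin k, (2 * (m i : ℝ) - 1) := by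
    rw [← Finset.prod_mul_distrib, ← Finset.prod_mul_distrib]
    apply Finset.prod_congr rfl
    intro i _
    have hfr : ((2 * n).factorial : ℝ) * RP (2 * (n : ℝ) + 1) (2 * (i : ℕ))
        = ((2 * n + 2 * (i : ℕ)).factorial : ℝ) := by
      have := factorial_RP (2 * n) (2 * (i : ℕ))
      push_cast at this ⊢
      convert this using 3 <;> push_cast <;> ring
    rw [show 2 * n + 2 * ((i : ℕ) + 1) - 2 = 2 * n + 2 * (i : ℕ) by omega]
    have hF1 : ((n + m i + k - 1).factorial : ℝ) ≠ 0 :=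
      Nat.cast_ne_zero.2 (Nat.factorial_ne_zero _)
    have hF2 : ((n + k - m i).factorial : ℝ) ≠ 0 :=
      Nat.cast_ne_zero.2 (Nat.factorial_ne_zero _)
    field_simp
    linear_combination (2 * (m i : ℝ) - 1) * hfr
  have hsq : (-1 : ℝ) ^ (k * (k - 1) / 2) * (-1 : ℝ) ^ (k * (k - 1) / 2) = 1 := by
    rw [← pow_add]
    exact Even.neg_one_pow ⟨k * (k - 1) / 2, rfl⟩
  calc (∏ i : Fin k, RP (2 * (n : ℝ) + 1) (2 * (i : ℕ)))
        * (((Equiv.Perm.sign (Fin.revPerm : Equiv.Perm (Fin k)) : ℤ) : ℝ)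
          * ((-1 : ℝ) ^ (k * (k - 1) / 2)
            * ((∏ i : Fin k, ∏ j ∈ Finset.Ioi i, ((m j : ℝ) - (m i : ℝ)))
              * ∏ i : Fin k, ∏ j ∈ Finset.Ioi i, ((m i : ℝ) + (m j : ℝ) - 1))))
        * ∏ j : Fin k, ((2 * n).factorial : ℝ)
            / (((n + m j + k - 1).factorial : ℝ) * ((n + k - m j).factorial : ℝ))
            * (2 * (m j : ℝ) - 1)
      = ((∏ i : Fin k, RP (2 * (n : ℝ) + 1) (2 * (i : ℕ)))
          * ∏ j : Fin k, ((2 * n).factorial : ℝ)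
            / (((n + m j + k - 1).factorial : ℝ) * ((n + k - m j).factorial : ℝ))
            * (2 * (m j : ℝ) - 1))
        * (((-1 : ℝ) ^ (k * (k - 1) / 2) * (-1 : ℝ) ^ (k * (k - 1) / 2))
          * ((∏ i : Fin k, ∏ j ∈ Finset.Ioi i, ((m j : ℝ) - (m i : ℝ)))
            * ∏ i : Fin k, ∏ j ∈ Finset.Ioi i, ((m i : ℝ) + (m j : ℝ) - 1))) := by
        rw [hsign]; ring
    _ = ((∏ i : Fin k, ((2 * n + 2 * ((i : ℕ) + 1) - 2).factorial : ℝ)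
          / (((n + m i + k - 1).factorial : ℝ) * ((n + k - m i).factorial : ℝ)))
          * ∏ i : Fin k, (2 * (m i : ℝ) - 1))
        * ((∏ i : Fin k, ∏ j ∈ Finset.Ioi i, ((m j : ℝ) - (m i : ℝ)))
            * ∏ i : Fin k, ∏ j ∈ Finset.Ioi i, ((m i : ℝ) + (m j : ℝ) - 1)) := by
        rw [hrowconst, hsq]; ring
    _ = (∏ i : Fin k, ((2 * n + 2 * ((i : ℕ) + 1) - 2).factorial : ℝ)
          / (((n + m i + k - 1).factorial : ℝ) * ((n + k - m i).factorial : ℝ)))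
        * (∏ i : Fin k, ∏ j ∈ Finset.Ioi i, ((m j : ℝ) - (m i : ℝ)))
        * ((∏ i : Fin k, ∏ j ∈ Finset.Ioi i, ((m i : ℝ) + (m j : ℝ) - 1))
          * ∏ i : Fin k, ((m i : ℝ) + (m i : ℝ) - 1)) := by
        rw [show (∏ i : Fin k, (2 * (m i : ℝ) - 1))
          = ∏ i : Fin k, ((m i : ℝ) + (m i : ℝ) - 1) from
          Finset.prod_congr rfl (fun i _ => by ring)]
        ring

end
end HalfcutAux
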